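/- Let r be a graphon with η ≤ r ≤ 1−η on [0,1]^2 for some η > 0, let C > 0, and set B_r = ∫_{[0,1]^2} r^3(1−r). Then the infimum of ∫_{[0,1]^2} Δ^2/(2r(1−r)) over all symmetric Δ ∈ L^2([0,1]^2) satisfying ∫_{[0,1]^2} rΔ = C equals C^2/(2B_r), and it is attained uniquely (up to a.e. equality) at Δ*(x,y) = (C/B_r) · r(x,y)^2 (1−r(x,y)). -/

import Mathlib

open MeasureTheory Real Filter Set Topology

noncomputable section

/-- The unit interval `[0,1]` as a subset of `ℝ`. -/
def UI : Set ℝ := Set.Icc 0 1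

/-- A graphon: a symmetric measurable function `[0,1]² → [0,1]`. -/
def IsGraphon (h : ℝ → ℝ → ℝ) : Prop :=
  Measurable (Function.uncurry h) ∧ (∀ x y, h x y = h y x) ∧
    ∀ x ∈ UI, ∀ y ∈ UI, h x y ∈ Set.Icc (0:ℝ) 1

/-- The operator norm of the integral operator `T_h` on `L²([0,1])` associated with a
symmetric bounded kernel `h`, expressed via its quadratic form. -/
def gOpNorm (h : ℝ → ℝ → ℝ) : ℝ :=
  sSup {t : ℝ | ∃ u : ℝ → ℝ, Measurable u ∧ IntegrableOn (fun x => u x ^ 2) UI ∧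
    (∫ x in UI, u x ^ 2) ≤ 1 ∧ t = |∫ x in UI, ∫ y in UI, u x * h x y * u y|}

/-- Relative entropy of Bernoulli(a) with respect to Bernoulli(b), with `0 log 0 = 0`. -/
def relEnt (a b : ℝ) : ℝ :=
  a * Real.log (a / b) + (1 - a) * Real.log ((1 - a) / (1 - b))

/-- The rate function `I_r(h) = ∫∫ R(h(x,y) | r(x,y)) dx dy`. -/
def Ient (r h : ℝ → ℝ → ℝ) : ℝ := ∫ x in UI, ∫ y in UI, relEnt (h x y) (r x y)

/-- The rate function `ψ_r(β) = inf { I_r(h) : h graphon, ‖T_h‖ = β }`. -/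
def psiRate (r : ℝ → ℝ → ℝ) (β : ℝ) : ℝ :=
  sInf {c : ℝ | ∃ h : ℝ → ℝ → ℝ, IsGraphon h ∧ gOpNorm h = β ∧ Ient r h = c}

/-- The `L²([0,1]²)` norm of a kernel. -/
def L2norm2 (f : ℝ → ℝ → ℝ) : ℝ := Real.sqrt (∫ x in UI, ∫ y in UI, f x y ^ 2)

end

section Helpers

lemma UI_meas : MeasurableSet UI := measurableSet_Icc

lemma E_meas : MeasurableSet (UI ×ˢ UI) := UI_meas.prod UI_meas

lemma E_vol : volume (UI ×ˢ UI) = 1 := by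
  rw [Measure.volume_eq_prod, Measure.prod_prod]
  simp [UI]

lemma intOn_of_bdd {f : ℝ × ℝ → ℝ} (hm : Measurable f) (M : ℝ)
    (hb : ∀ p ∈ UI ×ˢ UI, |f p| ≤ M) : IntegrableOn f (UI ×ˢ UI) := by
  refine Measure.integrableOn_of_bounded (M := M) (by simp [E_vol]) hm.aestronglyMeasurable ?_
  filter_upwards [ae_restrict_mem E_meas] with p hp
  simpa using hb p hp

lemma iter_eq (f : ℝ → ℝ → ℝ)
    (hf : IntegrableOn (fun p : ℝ × ℝ => f p.1 p.2) (UI ×ˢ UI)) :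
    ∫ x in UI, ∫ y in UI, f x y = ∫ p in UI ×ˢ UI, f p.1 p.2 := by
  have hf' : Integrable (Function.uncurry f) ((volume.restrict UI).prod (volume.restrict UI)) := by
    rw [Measure.prod_restrict, ← Measure.volume_eq_prod]; exact hf
  rw [Measure.volume_eq_prod, ← Measure.prod_restrict]
  exact integral_integral hf'

end Helpers

set_option maxHeartbeats 1000000 in
/-- the infimum of ∫∫ Δ²/(2r(1−r)) over symmetric Δ ∈ L²([0,1]²) with
∫∫ rΔ = C equals C²/(2B_r), attained uniquely at Δ* = (C/B_r)·r²(1−r). -/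
theorem optimal_balanced_perturbation
    (r : ℝ → ℝ → ℝ) (η : ℝ) (hη : 0 < η)
    (hrmeas : Measurable (Function.uncurry r))
    (hrsymm : ∀ x y, r x y = r y x)
    (hrbound : ∀ x ∈ UI, ∀ y ∈ UI, r x y ∈ Set.Icc η (1 - η))
    (C : ℝ) (hC : 0 < C) :
    (∫ x in UI, ∫ y in UI,
        ((C / ∫ x' in UI, ∫ y' in UI, (r x' y') ^ 3 * (1 - r x' y')) *
            (r x y) ^ 2 * (1 - r x y)) * r x y = C) ∧
    (∫ x in UI, ∫ y in UI,
        ((C / ∫ x' in UI, ∫ y' in UI, (r x' y') ^ 3 * (1 - r x' y')) *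
            (r x y) ^ 2 * (1 - r x y)) ^ 2 / (2 * r x y * (1 - r x y)))
      = C ^ 2 / (2 * ∫ x in UI, ∫ y in UI, (r x y) ^ 3 * (1 - r x y)) ∧
    (∀ Δ : ℝ → ℝ → ℝ, Measurable (Function.uncurry Δ) → (∀ x y, Δ x y = Δ y x) →
      IntegrableOn (fun p : ℝ × ℝ => (Δ p.1 p.2) ^ 2) (UI ×ˢ UI) →
      (∫ x in UI, ∫ y in UI, r x y * Δ x y) = C →
        C ^ 2 / (2 * ∫ x in UI, ∫ y in UI, (r x y) ^ 3 * (1 - r x y))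
          ≤ ∫ x in UI, ∫ y in UI, (Δ x y) ^ 2 / (2 * r x y * (1 - r x y))) ∧
    (∀ Δ : ℝ → ℝ → ℝ, Measurable (Function.uncurry Δ) → (∀ x y, Δ x y = Δ y x) →
      IntegrableOn (fun p : ℝ × ℝ => (Δ p.1 p.2) ^ 2) (UI ×ˢ UI) →
      (∫ x in UI, ∫ y in UI, r x y * Δ x y) = C →
      (∫ x in UI, ∫ y in UI, (Δ x y) ^ 2 / (2 * r x y * (1 - r x y)))
          = C ^ 2 / (2 * ∫ x in UI, ∫ y in UI, (r x y) ^ 3 * (1 - r x y)) →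
        ∀ᵐ p ∂(volume.restrict (UI ×ˢ UI)),
          Δ p.1 p.2 = (C / ∫ x' in UI, ∫ y' in UI, (r x' y') ^ 3 * (1 - r x' y')) *
            (r p.1 p.2) ^ 2 * (1 - r p.1 p.2)) := by
  have h01 : (0:ℝ) ∈ UI := by simp [UI]
  have hrm : Measurable fun p : ℝ × ℝ => r p.1 p.2 := hrmeas
  have hpt : ∀ p : ℝ × ℝ, p ∈ UI ×ˢ UI → η ≤ r p.1 p.2 ∧ r p.1 p.2 ≤ 1 - η := by
    intro p hp
    exact ⟨(hrbound _ hp.1 _ hp.2).1, (hrbound _ hp.1 _ hp.2).2⟩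
  have hr01 : ∀ p ∈ UI ×ˢ UI, 0 ≤ r p.1 p.2 ∧ r p.1 p.2 ≤ 1 := fun p hp =>
    ⟨le_trans hη.le (hpt p hp).1, le_trans (hpt p hp).2 (by linarith)⟩
  have hg3m : Measurable fun p : ℝ × ℝ => r p.1 p.2 ^ 3 * (1 - r p.1 p.2) :=
    (hrm.pow_const 3).mul (measurable_const.sub hrm)
  have hg3int : IntegrableOn (fun p : ℝ × ℝ => r p.1 p.2 ^ 3 * (1 - r p.1 p.2)) (UI ×ˢ UI) := by
    refine intOn_of_bdd hg3m 1 ?_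
    intro p hp
    obtain ⟨h0, h1⟩ := hr01 p hp
    have hnn : 0 ≤ r p.1 p.2 ^ 3 * (1 - r p.1 p.2) :=
      mul_nonneg (pow_nonneg h0 3) (by linarith)
    have hle : r p.1 p.2 ^ 3 * (1 - r p.1 p.2) ≤ 1 := by
      nlinarith [pow_le_one₀ (n := 3) h0 h1, pow_nonneg h0 3]
    rw [abs_le]
    constructor <;> linarith
  have hB : (∫ x in UI, ∫ y in UI, r x y ^ 3 * (1 - r x y))
      = ∫ p in UI ×ˢ UI, r p.1 p.2 ^ 3 * (1 - r p.1 p.2) :=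
      iter_eq (fun x y => r x y ^ 3 * (1 - r x y)) hg3int
  set B := ∫ p in UI ×ˢ UI, r p.1 p.2 ^ 3 * (1 - r p.1 p.2) with hBdef
  have hBpos : 0 < B := by
    have h1 : ∫ _p in UI ×ˢ UI, (η ^ 4 : ℝ) ≤ ∫ p in UI ×ˢ UI, r p.1 p.2 ^ 3 * (1 - r p.1 p.2) := by
      refine setIntegral_mono_on (integrableOn_const (by simp [E_vol])) hg3int E_meas ?_
      intro p hp
      obtain ⟨ha, hb⟩ := hpt p hp
      have e1 : η ^ 3 ≤ r p.1 p.2 ^ 3 := pow_le_pow_left₀ hη.le ha 3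
      have e2 : η ≤ 1 - r p.1 p.2 := by linarith
      calc η ^ 4 = η ^ 3 * η := by ring
        _ ≤ r p.1 p.2 ^ 3 * (1 - r p.1 p.2) :=
            mul_le_mul e1 e2 hη.le (pow_nonneg (le_trans hη.le ha) 3)
    rw [setIntegral_const, measureReal_def, E_vol] at h1
    simp only [ENNReal.toReal_one, one_smul] at h1
    calc (0:ℝ) < η ^ 4 := by positivity
      _ ≤ B := h1
  have hBne : B ≠ 0 := hBpos.ne'
  rw [hB]
  refine ⟨?_, ?_, ?_, ?_⟩
  · -- conjunct 1
    have hint1 : IntegrableOn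
        (fun p : ℝ × ℝ => ((C / B) * r p.1 p.2 ^ 2 * (1 - r p.1 p.2)) * r p.1 p.2) (UI ×ˢ UI) := by
      have : (fun p : ℝ × ℝ => ((C / B) * r p.1 p.2 ^ 2 * (1 - r p.1 p.2)) * r p.1 p.2)
          = fun p : ℝ × ℝ => (C / B) * (r p.1 p.2 ^ 3 * (1 - r p.1 p.2)) := by
        funext p; ring
      rw [this]
      exact hg3int.const_mul _
    rw [iter_eq (fun x y => ((C / B) * r x y ^ 2 * (1 - r x y)) * r x y) hint1,
      setIntegral_congr_fun E_meas
        (g := fun p : ℝ × ℝ => (C / B) * (r p.1 p.2 ^ 3 * (1 - r p.1 p.2)))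
        (fun p _ => by ring),
      integral_const_mul, ← hBdef, div_mul_cancel₀ _ hBne]
  · -- conjunct 2
    have hint2 : IntegrableOn
        (fun p : ℝ × ℝ => ((C / B) * r p.1 p.2 ^ 2 * (1 - r p.1 p.2)) ^ 2
          / (2 * r p.1 p.2 * (1 - r p.1 p.2))) (UI ×ˢ UI) := by
      refine intOn_of_bdd ?_ ((C / B) ^ 2 / 2) ?_
      · exact (((measurable_const.mul (hrm.pow_const 2)).mul (measurable_const.sub hrm)).pow_const 2).div
          ((measurable_const.mul hrm).mul (measurable_const.sub hrm))
      · intro p hp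
        obtain ⟨ha, hb⟩ := hpt p hp
        have h0 : 0 < r p.1 p.2 := lt_of_lt_of_le hη ha
        have h1 : 0 < 1 - r p.1 p.2 := lt_of_lt_of_le hη (by linarith)
        have h2 : ((C / B) * r p.1 p.2 ^ 2 * (1 - r p.1 p.2)) ^ 2
            / (2 * r p.1 p.2 * (1 - r p.1 p.2))
            = (C / B) ^ 2 / 2 * (r p.1 p.2 ^ 3 * (1 - r p.1 p.2)) := by
          field_simp
        rw [h2, abs_of_nonneg (by positivity)]
        have hr1 : r p.1 p.2 ≤ 1 := (hr01 p hp).2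
        have hg1 : r p.1 p.2 ^ 3 * (1 - r p.1 p.2) ≤ 1 := by
          nlinarith [pow_le_one₀ (n := 3) h0.le hr1, pow_nonneg h0.le 3]
        calc (C / B) ^ 2 / 2 * (r p.1 p.2 ^ 3 * (1 - r p.1 p.2))
            ≤ (C / B) ^ 2 / 2 * 1 := mul_le_mul_of_nonneg_left hg1 (by positivity)
          _ = (C / B) ^ 2 / 2 := mul_one _
    rw [iter_eq (fun x y => ((C / B) * r x y ^ 2 * (1 - r x y)) ^ 2 / (2 * r x y * (1 - r x y))) hint2,
      setIntegral_congr_fun E_meas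
        (g := fun p : ℝ × ℝ => C ^ 2 / (2 * B ^ 2) * (r p.1 p.2 ^ 3 * (1 - r p.1 p.2)))
        (fun p hp => by
          obtain ⟨ha, hb⟩ := hpt p hp
          have h0 : r p.1 p.2 ≠ 0 := (lt_of_lt_of_le hη ha).ne'
          have h1 : (1 : ℝ) - r p.1 p.2 ≠ 0 := (lt_of_lt_of_le hη (by linarith)).ne'
          field_simp),
      integral_const_mul, ← hBdef]
    field_simp
  all_goals {
  intro Δ hΔm hΔs hΔ2 hΔC
  have hΔm' : Measurable fun p : ℝ × ℝ => Δ p.1 p.2 := hΔm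
  -- integrability of r·Δ on E
  have hrΔint : IntegrableOn (fun p : ℝ × ℝ => r p.1 p.2 * Δ p.1 p.2) (UI ×ˢ UI) := by
    have hone : IntegrableOn (fun _ : ℝ × ℝ => (1:ℝ)) (UI ×ˢ UI) :=
      integrableOn_const (by simp [E_vol])
    have hbd : IntegrableOn (fun p : ℝ × ℝ => (1 + Δ p.1 p.2 ^ 2) / 2) (UI ×ˢ UI) :=
      (hone.add hΔ2).div_const 2
    refine Integrable.mono' hbd (hrm.mul hΔm').aestronglyMeasurable ?_
    filter_upwards [ae_restrict_mem E_meas] with p hp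
    obtain ⟨h0, h1⟩ := hr01 p hp
    rw [Real.norm_eq_abs, abs_mul]
    have h2 : |r p.1 p.2| ≤ 1 := abs_le.2 ⟨by linarith, h1⟩
    have h3 : |Δ p.1 p.2| ≤ (1 + Δ p.1 p.2 ^ 2) / 2 := by
      nlinarith [sq_nonneg (|Δ p.1 p.2| - 1), sq_abs (Δ p.1 p.2)]
    calc |r p.1 p.2| * |Δ p.1 p.2| ≤ 1 * |Δ p.1 p.2| :=
          mul_le_mul_of_nonneg_right h2 (abs_nonneg _)
      _ = |Δ p.1 p.2| := one_mul _
      _ ≤ (1 + Δ p.1 p.2 ^ 2) / 2 := h3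
  have hconv : (∫ p in UI ×ˢ UI, r p.1 p.2 * Δ p.1 p.2) = C := by
    rw [← iter_eq (fun x y => r x y * Δ x y) hrΔint]; exact hΔC
  -- positivity of the weight on E
  have hwpos : ∀ p ∈ UI ×ˢ UI, (0:ℝ) < 2 * r p.1 p.2 * (1 - r p.1 p.2) ∧
      2 * η ^ 2 ≤ 2 * r p.1 p.2 * (1 - r p.1 p.2) := by
    intro p hp
    obtain ⟨ha, hb⟩ := hpt p hp
    constructor
    · have h0 : 0 < r p.1 p.2 := lt_of_lt_of_le hη ha
      have h1 : 0 < 1 - r p.1 p.2 := lt_of_lt_of_le hη (by linarith)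
      positivity
    · nlinarith
  have hwm : Measurable fun p : ℝ × ℝ => 2 * r p.1 p.2 * (1 - r p.1 p.2) :=
    (measurable_const.mul hrm).mul (measurable_const.sub hrm)
  -- integrability of Δ²/w on E
  have hq_int : IntegrableOn
      (fun p : ℝ × ℝ => Δ p.1 p.2 ^ 2 / (2 * r p.1 p.2 * (1 - r p.1 p.2))) (UI ×ˢ UI) := by
    refine Integrable.mono' (hΔ2.const_mul (1 / (2 * η ^ 2)))
      ((hΔm'.pow_const 2).div hwm).aestronglyMeasurable ?_
    filter_upwards [ae_restrict_mem E_meas] with p hp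
    obtain ⟨hw0, hw1⟩ := hwpos p hp
    rw [Real.norm_eq_abs, abs_div, abs_of_nonneg (sq_nonneg _), abs_of_pos hw0,
      div_le_iff₀ hw0]
    have hη2 : (0:ℝ) < 2 * η ^ 2 := by positivity
    calc Δ p.1 p.2 ^ 2 = 1 / (2 * η ^ 2) * Δ p.1 p.2 ^ 2 * (2 * η ^ 2) := by
          field_simp
      _ ≤ 1 / (2 * η ^ 2) * Δ p.1 p.2 ^ 2 * (2 * r p.1 p.2 * (1 - r p.1 p.2)) := by
          have : 0 ≤ 1 / (2 * η ^ 2) * Δ p.1 p.2 ^ 2 := by positivity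
          exact mul_le_mul_of_nonneg_left hw1 this
  -- the difference D
  set D : ℝ × ℝ → ℝ :=
    fun p => Δ p.1 p.2 - (C / B) * r p.1 p.2 ^ 2 * (1 - r p.1 p.2) with hDdef
  have hDm : Measurable D :=
    hΔm'.sub ((measurable_const.mul (hrm.pow_const 2)).mul (measurable_const.sub hrm))
  have hD2int : IntegrableOn (fun p => D p ^ 2) (UI ×ˢ UI) := by
    have hcst : IntegrableOn (fun _ : ℝ × ℝ => 2 * (C / B) ^ 2) (UI ×ˢ UI) :=
      integrableOn_const (by simp [E_vol])
    have hbd2 : IntegrableOn (fun p : ℝ × ℝ => 2 * Δ p.1 p.2 ^ 2 + 2 * (C / B) ^ 2) (UI ×ˢ UI) :=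
      (hΔ2.const_mul 2).add hcst
    refine Integrable.mono' hbd2 (hDm.pow_const 2).aestronglyMeasurable ?_
    filter_upwards [ae_restrict_mem E_meas] with p hp
    obtain ⟨h0, h1⟩ := hr01 p hp
    rw [Real.norm_eq_abs, abs_of_nonneg (sq_nonneg _)]
    have hst : |(C / B) * r p.1 p.2 ^ 2 * (1 - r p.1 p.2)| ≤ |C / B| := by
      rw [abs_mul, abs_mul]
      have e1 : |r p.1 p.2 ^ 2| ≤ 1 := by rw [abs_of_nonneg (sq_nonneg _)]; nlinarith
      have e2 : |1 - r p.1 p.2| ≤ 1 := abs_le.2 ⟨by linarith, by linarith⟩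
      calc |C / B| * |r p.1 p.2 ^ 2| * |1 - r p.1 p.2| ≤ |C / B| * 1 * 1 := by
            apply mul_le_mul (mul_le_mul_of_nonneg_left e1 (abs_nonneg _)) e2 (abs_nonneg _)
            positivity
        _ = |C / B| := by ring
    have : D p ^ 2 ≤ 2 * Δ p.1 p.2 ^ 2 + 2 * (C / B) ^ 2 := by
      rw [hDdef]
      nlinarith [sq_abs ((C / B) * r p.1 p.2 ^ 2 * (1 - r p.1 p.2)), sq_abs (C / B),
        sq_nonneg (Δ p.1 p.2 + (C / B) * r p.1 p.2 ^ 2 * (1 - r p.1 p.2)),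
        abs_nonneg ((C / B) * r p.1 p.2 ^ 2 * (1 - r p.1 p.2)), abs_nonneg (C / B),
        mul_self_le_mul_self (abs_nonneg ((C / B) * r p.1 p.2 ^ 2 * (1 - r p.1 p.2))) hst]
    calc D p ^ 2 ≤ 2 * Δ p.1 p.2 ^ 2 + 2 * (C / B) ^ 2 := this
      _ = 2 * Δ p.1 p.2 ^ 2 + 2 * (C / B) ^ 2 := rfl
  have hq2_int : IntegrableOn
      (fun p : ℝ × ℝ => D p ^ 2 / (2 * r p.1 p.2 * (1 - r p.1 p.2))) (UI ×ˢ UI) := by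
    refine Integrable.mono' (hD2int.const_mul (1 / (2 * η ^ 2)))
      ((hDm.pow_const 2).div hwm).aestronglyMeasurable ?_
    filter_upwards [ae_restrict_mem E_meas] with p hp
    obtain ⟨hw0, hw1⟩ := hwpos p hp
    rw [Real.norm_eq_abs, abs_div, abs_of_nonneg (sq_nonneg _), abs_of_pos hw0,
      div_le_iff₀ hw0]
    calc D p ^ 2 = 1 / (2 * η ^ 2) * D p ^ 2 * (2 * η ^ 2) := by field_simp
      _ ≤ 1 / (2 * η ^ 2) * D p ^ 2 * (2 * r p.1 p.2 * (1 - r p.1 p.2)) := by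
          have : 0 ≤ 1 / (2 * η ^ 2) * D p ^ 2 := by positivity
          exact mul_le_mul_of_nonneg_left hw1 this
  -- key identity
  have hkey : (∫ p in UI ×ˢ UI, D p ^ 2 / (2 * r p.1 p.2 * (1 - r p.1 p.2)))
      = (∫ p in UI ×ˢ UI, Δ p.1 p.2 ^ 2 / (2 * r p.1 p.2 * (1 - r p.1 p.2))) - C ^ 2 / (2 * B) := by
    have step1 : (∫ p in UI ×ˢ UI, D p ^ 2 / (2 * r p.1 p.2 * (1 - r p.1 p.2)))
        = ∫ p in UI ×ˢ UI, (Δ p.1 p.2 ^ 2 / (2 * r p.1 p.2 * (1 - r p.1 p.2))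
            - (C / B) * (r p.1 p.2 * Δ p.1 p.2)
            + C ^ 2 / (2 * B ^ 2) * (r p.1 p.2 ^ 3 * (1 - r p.1 p.2))) := by
      refine setIntegral_congr_fun E_meas ?_
      intro p hp
      obtain ⟨ha, hb⟩ := hpt p hp
      have h0 : r p.1 p.2 ≠ 0 := (lt_of_lt_of_le hη ha).ne'
      have h1 : (1:ℝ) - r p.1 p.2 ≠ 0 := (lt_of_lt_of_le hη (by linarith)).ne'
      rw [hDdef]
      field_simp
      ring
    have hbint : IntegrableOn (fun p : ℝ × ℝ => (C / B) * (r p.1 p.2 * Δ p.1 p.2)) (UI ×ˢ UI) :=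
      hrΔint.const_mul _
    have hcint : IntegrableOn
        (fun p : ℝ × ℝ => C ^ 2 / (2 * B ^ 2) * (r p.1 p.2 ^ 3 * (1 - r p.1 p.2))) (UI ×ˢ UI) :=
      hg3int.const_mul _
    have hfsub : IntegrableOn
        (fun p : ℝ × ℝ => Δ p.1 p.2 ^ 2 / (2 * r p.1 p.2 * (1 - r p.1 p.2))
          - (C / B) * (r p.1 p.2 * Δ p.1 p.2)) (UI ×ˢ UI) := hq_int.sub hbint
    rw [step1, integral_add hfsub hcint, integral_sub hq_int hbint, integral_const_mul,
      integral_const_mul, hconv, ← hBdef]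
    field_simp
    ring
  first
  | -- conjunct 3
    (rw [iter_eq (fun x y => Δ x y ^ 2 / (2 * r x y * (1 - r x y))) hq_int]
     have h0 : 0 ≤ ∫ p in UI ×ˢ UI, D p ^ 2 / (2 * r p.1 p.2 * (1 - r p.1 p.2)) := by
       refine setIntegral_nonneg E_meas ?_
       intro p hp
       exact div_nonneg (sq_nonneg _) (hwpos p hp).1.le
     linarith)
  | -- conjunct 4
    (intro heq
     have hI : (∫ p in UI ×ˢ UI, Δ p.1 p.2 ^ 2 / (2 * r p.1 p.2 * (1 - r p.1 p.2)))
         = C ^ 2 / (2 * B) := by rw [← iter_eq (fun x y => Δ x y ^ 2 / (2 * r x y * (1 - r x y))) hq_int]; exact heq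
     have hzero : (∫ p in UI ×ˢ UI, D p ^ 2 / (2 * r p.1 p.2 * (1 - r p.1 p.2))) = 0 := by
       rw [hkey, hI]; ring
     have hnn : 0 ≤ᶠ[ae (volume.restrict (UI ×ˢ UI))]
         fun p : ℝ × ℝ => D p ^ 2 / (2 * r p.1 p.2 * (1 - r p.1 p.2)) := by
       filter_upwards [ae_restrict_mem E_meas] with p hp
       exact div_nonneg (sq_nonneg _) (hwpos p hp).1.le
     have hae := (integral_eq_zero_iff_of_nonneg_ae hnn hq2_int).1 hzero
     filter_upwards [hae, ae_restrict_mem E_meas] with p h0 hp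
     have hw0 := (hwpos p hp).1
     have hD0 : D p = 0 := by
       have h0' : D p ^ 2 / (2 * r p.1 p.2 * (1 - r p.1 p.2)) = 0 := h0
       rcases div_eq_zero_iff.1 h0' with h | h
       · exact pow_eq_zero_iff (by norm_num) |>.1 h
       · exact absurd h hw0.ne'
     have := sub_eq_zero.1 hD0
     linarith [this])
  }
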